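/- There exists no mechanism that is both near-perfect and incentive compatible: for every (randomised) mechanism ℳ, if for every IKEP instance I whose compatibility graph admits a Γ-cycle packing covering all but at most one vertex the distribution ℳ(I) returns, with probability 1, a Γ-cycle packing covering all but at most one vertex, then ℳ is not incentive compatible. -/

import Mathlib

open scoped Classical

/-- An `n`-partitioned compatibility graph: a finite directed graph on a finite
set of natural-number vertices, without self-loops, whose vertex set is
partitioned into `n` nonempty countries. -/
structure PartGraph (n : ℕ) where
  verts : Finset ℕ
  arcs : Finset (ℕ × ℕ)
  arcs_mem : ∀ p ∈ arcs, p.1 ∈ verts ∧ p.2 ∈ verts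
  no_loops : ∀ v, (v, v) ∉ arcs
  country : ℕ → Fin n
  country_nonempty : ∀ i : Fin n, ∃ v ∈ verts, country v = i

/-- Cyclic access to the entries of a list. -/
def cyc (l : List ℕ) (k : ℕ) : ℕ := l.getD (k % l.length) 0

/-- `l` is a (directed) cycle of `G`: a cyclic sequence of at least two distinct
vertices, consecutive ones (cyclically) joined by arcs. -/
def IsCycle {n : ℕ} (G : PartGraph n) (l : List ℕ) : Prop :=
  2 ≤ l.length ∧ l.Nodup ∧ (∀ v ∈ l, v ∈ G.verts) ∧
    ∀ k < l.length, (cyc l k, cyc l (k + 1)) ∈ G.arcs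

/-- All vertices of `l` belong to country `i`. -/
def IsNationalTo {n : ℕ} (G : PartGraph n) (l : List ℕ) (i : Fin n) : Prop :=
  ∀ v ∈ l, G.country v = i

/-- A national cycle: all vertices in one country. -/
def IsNational {n : ℕ} (G : PartGraph n) (l : List ℕ) : Prop :=
  ∃ i, IsNationalTo G l i

/-- An international cycle: not national (equivalently, for cycles, it contains
an international arc). -/
def IsInternational {n : ℕ} (G : PartGraph n) (l : List ℕ) : Prop :=
  ¬ IsNational G l

/-- Position `k` (taken cyclically) is the start of a `V_i`-segment of `l`:
the vertex there is in country `i` but the cyclically preceding one is not. -/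
def segStart {n : ℕ} (G : PartGraph n) (l : List ℕ) (i : Fin n) (k : ℕ) : Prop :=
  G.country (cyc l k) = i ∧ G.country (cyc l (k + l.length - 1)) ≠ i

/-- The size of the run of consecutive (cyclic) positions of `l`, starting at
position `k`, whose vertices are in country `i`.  At a segment start this is
exactly the size of that `V_i`-segment. -/
noncomputable def runLen {n : ℕ} (G : PartGraph n) (l : List ℕ) (i : Fin n) (k : ℕ) : ℕ :=
  ((Finset.range l.length).filter
    fun j => ∀ j' ≤ j, G.country (cyc l (k + j')) = i).card

/-- The number of `V_i`-segments of the cycle `l`. -/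
noncomputable def numSegs {n : ℕ} (G : PartGraph n) (l : List ℕ) (i : Fin n) : ℕ :=
  ((Finset.range l.length).filter fun k => segStart G l i k).card

/-- A set `Γ` of country-specific parameters for `n` countries. -/
structure Params (n : ℕ) where
  icl : ℕ∞
  ncl : Fin n → ℕ∞
  iss : Fin n → ℕ∞
  isn : Fin n → ℕ∞
  icl_ne_one : icl ≠ 1
  ncl_ne_one : ∀ i, ncl i ≠ 1
  iss_pos : ∀ i, 1 ≤ iss i
  isn_pos : ∀ i, 1 ≤ isn i

/-- `l` is a `Γ`-cycle of `(G, 𝒱)`. -/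
def IsGammaCycle {n : ℕ} (G : PartGraph n) (Γ : Params n) (l : List ℕ) : Prop :=
  IsCycle G l ∧
    ((∃ i, IsNationalTo G l i ∧ (l.length : ℕ∞) ≤ Γ.ncl i) ∨
      (IsInternational G l ∧ (l.length : ℕ∞) ≤ Γ.icl ∧
        (∀ i, ∀ k < l.length, segStart G l i k → (runLen G l i k : ℕ∞) ≤ Γ.iss i) ∧
        (∀ i, (numSegs G l i : ℕ∞) ≤ Γ.isn i)))

/-- A cycle packing of `G`: a set of pairwise vertex-disjoint cycles. -/
def IsPacking {n : ℕ} (G : PartGraph n) (P : Finset (List ℕ)) : Prop :=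
  (∀ l ∈ P, IsCycle G l) ∧
    ∀ l ∈ P, ∀ l' ∈ P, l ≠ l' → ∀ v ∈ l, v ∉ l'

/-- The size of a cycle packing: total number of arcs (= vertices) of its cycles. -/
def packSize (P : Finset (List ℕ)) : ℕ := ∑ l ∈ P, l.length

/-- A `Γ`-cycle packing of `(G, 𝒱)`. -/
def IsGammaPackingG {n : ℕ} (G : PartGraph n) (Γ : Params n) (P : Finset (List ℕ)) : Prop :=
  IsPacking G P ∧ ∀ l ∈ P, IsGammaCycle G Γ l


/-- An IKEP instance `I = ⟨G, 𝒱, Γ⟩`. -/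
structure IKEP where
  n : ℕ
  npos : 1 ≤ n
  G : PartGraph n
  prm : Params n

/-- A `Γ`-cycle packing of the instance `I`. -/
def IsGammaPacking (I : IKEP) (P : Finset (List ℕ)) : Prop :=
  IsGammaPackingG I.G I.prm P

/-- The utility `u_i(C)` of country `i` from the cycle `C`: the number of arcs
of `C` entering country `i`, i.e. the number of vertices of `C` in country `i`. -/
noncomputable def cycUtil {n : ℕ} (G : PartGraph n) (i : Fin n) (l : List ℕ) : ℕ :=
  (l.filter fun v => G.country v = i).length

/-- The utility `u_i(𝒞)` of country `i` from a cycle packing. -/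
noncomputable def packUtil {n : ℕ} (G : PartGraph n) (i : Fin n) (P : Finset (List ℕ)) : ℕ :=
  ∑ l ∈ P, cycUtil G i l

/-- `opt(I)`: the maximum size of a `Γ`-cycle packing of `G`. -/
noncomputable def optSize (I : IKEP) : ℕ :=
  sSup {m | ∃ P, IsGammaPacking I P ∧ packSize P = m}

/-- `nat_i(I)`: the maximum size of a `Γ`-cycle packing of the subgraph
`G[V_i]` induced by country `i` (all its cycles are national, so the only
constraint from `Γ` is the national cycle limit `ncl i`). -/
noncomputable def natSize (I : IKEP) (i : Fin I.n) : ℕ :=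
  sSup {m | ∃ P, IsPacking I.G P ∧ (∀ l ∈ P, IsNationalTo I.G l i) ∧
    (∀ l ∈ P, (l.length : ℕ∞) ≤ I.prm.ncl i) ∧ packSize P = m}

/-- A (randomised) mechanism: for every IKEP instance it returns one `Γ`-cycle
packing according to a (finitely supported) probability distribution on the
set `𝒟_I` of all `Γ`-cycle packings of `G`. -/
structure Mechanism where
  dist : IKEP → (Finset (List ℕ) →₀ ℝ)
  nonneg : ∀ I P, 0 ≤ dist I P
  sum_one : ∀ I, ((dist I).sum fun _ p => p) = 1
  supp : ∀ I P, dist I P ≠ 0 → IsGammaPacking I P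

/-- The expected utility `U_i(ℳ(I))` of country `i`. -/
noncomputable def expUtil (M : Mechanism) (I : IKEP) (i : Fin I.n) : ℝ :=
  (M.dist I).sum fun P p => p * (packUtil I.G i P : ℝ)

/-- The expected social welfare `SW(ℳ(I)) = Σ_i U_i(ℳ(I))`: the expected size
of the returned packing. -/
noncomputable def sw (M : Mechanism) (I : IKEP) : ℝ :=
  (M.dist I).sum fun P p => p * (packSize P : ℝ)

/-- Individual rationality. -/
def IndRational (M : Mechanism) : Prop :=
  ∀ I : IKEP, ∀ i : Fin I.n, (natSize I i : ℝ) ≤ expUtil M I i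

/-- Efficiency. -/
def Efficient (M : Mechanism) : Prop :=
  ∀ I : IKEP, sw M I = (optSize I : ℝ)

/-- `Γ' ≤ᵢ Γ`: country `i` misreports by declaring (weakly) smaller
international segment size and segment number; all other parameters agree. -/
def ParamLE {n : ℕ} (i : Fin n) (Γ' Γ : Params n) : Prop :=
  Γ'.icl = Γ.icl ∧ Γ'.ncl = Γ.ncl ∧
    Γ'.iss i ≤ Γ.iss i ∧ Γ'.isn i ≤ Γ.isn i ∧
    (∀ h, h ≠ i → Γ'.iss h = Γ.iss h) ∧ (∀ h, h ≠ i → Γ'.isn h = Γ.isn h)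

/-- Incentive compatibility (with respect to segment size and segment number). -/
def IncentiveCompatible (M : Mechanism) : Prop :=
  ∀ I : IKEP, ∀ i : Fin I.n, ∀ Γ' : Params I.n, ParamLE i Γ' I.prm →
    expUtil M { I with prm := Γ' } i ≤ expUtil M I i

/-- An international `Γ`-cycle of the instance `I`. -/
def IsIntlGammaCycle (I : IKEP) (l : List ℕ) : Prop :=
  IsGammaCycle I.G I.prm l ∧ IsInternational I.G l

/-- `c_int(I)`: the maximum length of an international `Γ`-cycle of `G`. -/
noncomputable def cInt (I : IKEP) : ℕ :=
  sSup {s | ∃ l, IsIntlGammaCycle I l ∧ l.length = s}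


/-- The set of vertices of `G` covered by none of the cycles of `P`. -/
noncomputable def uncovered (I : IKEP) (P : Finset (List ℕ)) : Finset ℕ :=
  I.G.verts.filter fun v => ∀ l ∈ P, v ∉ l

/-- A near-perfect mechanism: on every instance admitting a `Γ`-cycle packing
covering all but at most one vertex, it returns (with probability 1) a
`Γ`-cycle packing covering all but at most one vertex. -/
def NearPerfectMech (M : Mechanism) : Prop :=
  ∀ I : IKEP, (∃ P, IsGammaPacking I P ∧ (uncovered I P).card ≤ 1) →
    ∀ P, M.dist I P ≠ 0 → (uncovered I P).card ≤ 1

/- ======================= Auxiliary development ======================= -/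

section Decidability

instance {n : ℕ} (G : PartGraph n) (l : List ℕ) (i : Fin n) (k : ℕ) :
    Decidable (segStart G l i k) :=
  decidable_of_iff (G.country (cyc l k) = i ∧ G.country (cyc l (k + l.length - 1)) ≠ i) Iff.rfl

instance {n : ℕ} (G : PartGraph n) (l : List ℕ) : Decidable (IsCycle G l) :=
  decidable_of_iff (2 ≤ l.length ∧ l.Nodup ∧ (∀ v ∈ l, v ∈ G.verts) ∧
    ∀ k < l.length, (cyc l k, cyc l (k + 1)) ∈ G.arcs) Iff.rfl

instance {n : ℕ} (G : PartGraph n) (l : List ℕ) (i : Fin n) : Decidable (IsNationalTo G l i) :=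
  decidable_of_iff (∀ v ∈ l, G.country v = i) Iff.rfl

instance {n : ℕ} (G : PartGraph n) (l : List ℕ) : Decidable (IsNational G l) :=
  decidable_of_iff (∃ i, IsNationalTo G l i) Iff.rfl

instance {n : ℕ} (G : PartGraph n) (l : List ℕ) : Decidable (IsInternational G l) :=
  decidable_of_iff (¬ IsNational G l) Iff.rfl

instance {n : ℕ} (G : PartGraph n) (P : Finset (List ℕ)) : Decidable (IsPacking G P) :=
  decidable_of_iff ((∀ l ∈ P, IsCycle G l) ∧
    ∀ l ∈ P, ∀ l' ∈ P, l ≠ l' → ∀ v ∈ l, v ∉ l') Iff.rfl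

lemma numSegs_eq {n : ℕ} (G : PartGraph n) (l : List ℕ) (i : Fin n) :
    numSegs G l i = ((Finset.range l.length).filter fun k => segStart G l i k).card := by
  unfold numSegs
  rw [Finset.filter_congr_decidable]

lemma runLen_eq {n : ℕ} (G : PartGraph n) (l : List ℕ) (i : Fin n) (k : ℕ) :
    runLen G l i k = ((Finset.range l.length).filter
      fun j => ∀ j' ≤ j, G.country (cyc l (k + j')) = i).card := by
  unfold runLen
  rw [Finset.filter_congr_decidable]

end Decidability

section CycAPI

variable {n : ℕ} {G : PartGraph n} {l : List ℕ} {v w : ℕ}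

lemma cyc_congr (l : List ℕ) {k m : ℕ} (h : k % l.length = m % l.length) :
    cyc l k = cyc l m := by
  unfold cyc; rw [h]

lemma cyc_mod (l : List ℕ) (k : ℕ) : cyc l k = cyc l (k % l.length) := by
  rcases Nat.eq_zero_or_pos l.length with h0 | h0
  · unfold cyc; rw [h0]; simp
  · exact cyc_congr l (by rw [Nat.mod_mod_of_dvd _ dvd_rfl])

lemma cyc_mem (h : 0 < l.length) (k : ℕ) : cyc l k ∈ l := by
  unfold cyc
  rw [List.getD_eq_getElem l 0 (Nat.mod_lt _ h)]
  exact List.getElem_mem _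

lemma cyc_indexOf (hv : v ∈ l) : cyc l (l.idxOf v) = v := by
  have h1 : l.idxOf v < l.length := List.idxOf_lt_length_iff.mpr hv
  unfold cyc
  rw [Nat.mod_eq_of_lt h1, List.getD_eq_getElem l 0 h1, List.getElem_idxOf h1]

lemma indexOf_cyc (hnd : l.Nodup) (h : 0 < l.length) (k : ℕ) :
    l.idxOf (cyc l k) = k % l.length := by
  have h1 : k % l.length < l.length := Nat.mod_lt _ h
  unfold cyc
  rw [List.getD_eq_getElem l 0 h1]
  exact hnd.idxOf_getElem _ h1

lemma arc_cyc (hc : IsCycle G l) (k : ℕ) : (cyc l k, cyc l (k + 1)) ∈ G.arcs := by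
  have h0 : 0 < l.length := lt_of_lt_of_le two_pos hc.1
  have h1 : k % l.length < l.length := Nat.mod_lt _ h0
  have h2 := hc.2.2.2 _ h1
  have e1 : cyc l (k % l.length) = cyc l k := (cyc_mod l k).symm
  have e2 : cyc l (k % l.length + 1) = cyc l (k + 1) := cyc_congr l (Nat.mod_add_mod k l.length 1)
  rwa [e1, e2] at h2

/-- cyclic successor of a vertex in a list -/
def nxt (l : List ℕ) (v : ℕ) : ℕ := cyc l (l.idxOf v + 1)

/-- cyclic predecessor of a vertex in a list -/
def prv (l : List ℕ) (v : ℕ) : ℕ := cyc l (l.idxOf v + (l.length - 1))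

lemma nxt_mem (h : 0 < l.length) (v : ℕ) : nxt l v ∈ l := cyc_mem h _

lemma prv_mem (h : 0 < l.length) (v : ℕ) : prv l v ∈ l := cyc_mem h _

lemma arc_nxt (hc : IsCycle G l) (hv : v ∈ l) : (v, nxt l v) ∈ G.arcs := by
  have h := arc_cyc hc (l.idxOf v)
  rwa [cyc_indexOf hv] at h

lemma arc_prv (hc : IsCycle G l) (hv : v ∈ l) : (prv l v, v) ∈ G.arcs := by
  have h0 : 0 < l.length := lt_of_lt_of_le two_pos hc.1
  have h := arc_cyc hc (l.idxOf v + (l.length - 1))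
  have e : cyc l (l.idxOf v + (l.length - 1) + 1) = cyc l (l.idxOf v) := by
    apply cyc_congr
    rw [show l.idxOf v + (l.length - 1) + 1 = l.idxOf v + l.length by omega,
      Nat.add_mod_right]
  rwa [e, cyc_indexOf hv] at h

lemma prv_nxt (hnd : l.Nodup) (h0 : 0 < l.length) (hv : v ∈ l) : prv l (nxt l v) = v := by
  unfold prv nxt
  rw [indexOf_cyc hnd h0]
  have e : cyc l ((l.idxOf v + 1) % l.length + (l.length - 1)) = cyc l (l.idxOf v) := by
    apply cyc_congr
    rw [Nat.mod_add_mod, show l.idxOf v + 1 + (l.length - 1) = l.idxOf v + l.length by omega,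
      Nat.add_mod_right]
  rw [e, cyc_indexOf hv]

lemma nxt_prv (hnd : l.Nodup) (h0 : 0 < l.length) (hv : v ∈ l) : nxt l (prv l v) = v := by
  unfold prv nxt
  rw [indexOf_cyc hnd h0]
  have e : cyc l ((l.idxOf v + (l.length - 1)) % l.length + 1) = cyc l (l.idxOf v) := by
    apply cyc_congr
    rw [Nat.mod_add_mod, show l.idxOf v + (l.length - 1) + 1 = l.idxOf v + l.length by omega,
      Nat.add_mod_right]
  rw [e, cyc_indexOf hv]

lemma nxt_inj (hnd : l.Nodup) (h0 : 0 < l.length) (ha : v ∈ l) (hb : w ∈ l)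
    (h : nxt l v = nxt l w) : v = w := by
  rw [← prv_nxt hnd h0 ha, h, prv_nxt hnd h0 hb]

lemma segStart_at {i : Fin n} (hv : v ∈ l)
    (hci : G.country v = i) (hpi : G.country (prv l v) ≠ i) :
    segStart G l i (l.idxOf v) := by
  constructor
  · rw [cyc_indexOf hv]; exact hci
  · rw [show l.idxOf v + l.length - 1 = l.idxOf v + (l.length - 1) by
      have := List.idxOf_lt_length_iff.mpr hv; omega]
    exact hpi

lemma two_le_numSegs {i : Fin n} (hv : v ∈ l) (hw : w ∈ l) (hvw : v ≠ w)
    (hs1 : segStart G l i (l.idxOf v)) (hs2 : segStart G l i (l.idxOf w)) :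
    2 ≤ numSegs G l i := by
  rw [numSegs_eq]
  have hkv : l.idxOf v < l.length := List.idxOf_lt_length_iff.mpr hv
  have hkw : l.idxOf w < l.length := List.idxOf_lt_length_iff.mpr hw
  have hne : l.idxOf v ≠ l.idxOf w := by
    intro h; apply hvw
    rw [← cyc_indexOf hv, h, cyc_indexOf hw]
  have hsub : ({l.idxOf v, l.idxOf w} : Finset ℕ) ⊆
      (Finset.range l.length).filter fun k => segStart G l i k := by
    intro k hk
    rw [Finset.mem_insert, Finset.mem_singleton] at hk
    rw [Finset.mem_filter, Finset.mem_range]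
    rcases hk with rfl | rfl
    exacts [⟨hkv, hs1⟩, ⟨hkw, hs2⟩]
  calc 2 = ({l.idxOf v, l.idxOf w} : Finset ℕ).card := (Finset.card_pair hne).symm
    _ ≤ _ := Finset.card_le_card hsub

lemma two_le_runLen {i : Fin n} (h2 : 2 ≤ l.length) (hv : v ∈ l)
    (hc0 : G.country v = i) (hc1 : G.country (nxt l v) = i) :
    2 ≤ runLen G l i (l.idxOf v) := by
  rw [runLen_eq]
  have hsub : ({0, 1} : Finset ℕ) ⊆ (Finset.range l.length).filter
      fun j => ∀ j' ≤ j, G.country (cyc l (l.idxOf v + j')) = i := by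
    intro j hj
    rw [Finset.mem_insert, Finset.mem_singleton] at hj
    rw [Finset.mem_filter, Finset.mem_range]
    have e0 : cyc l (l.idxOf v + 0) = v := by rw [Nat.add_zero, cyc_indexOf hv]
    rcases hj with rfl | rfl
    · refine ⟨by omega, ?_⟩
      intro j' hj'
      interval_cases j'
      rw [e0]; exact hc0
    · refine ⟨by omega, ?_⟩
      intro j' hj'
      interval_cases j'
      · rw [e0]; exact hc0
      · exact hc1
  calc 2 = ({0, 1} : Finset ℕ).card := by decide
    _ ≤ _ := Finset.card_le_card hsub

lemma numSegs_le {i : Fin n} (S : Finset ℕ)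
    (h : ∀ k, k < l.length → segStart G l i k → k ∈ S) : numSegs G l i ≤ S.card := by
  rw [numSegs_eq]
  apply Finset.card_le_card
  intro k hk
  rw [Finset.mem_filter, Finset.mem_range] at hk
  exact h k hk.1 hk.2

lemma same_list {P : Finset (List ℕ)} {l l' : List ℕ} (hp : IsPacking G P)
    (hl : l ∈ P) (hl' : l' ∈ P) (hv : v ∈ l) (hv' : v ∈ l') : l = l' := by
  by_contra hne
  exact hp.2 l hl l' hl' hne v hv hv'

end CycAPI

/- ======================= The concrete counterexample ======================= -/

def vertsX : Finset ℕ := {1, 2, 3, 4, 5, 6, 7}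

def arcsX : Finset (ℕ × ℕ) :=
  {(1,2), (2,3), (3,4), (4,5), (5,6), (6,1), (1,7), (7,3), (3,6), (2,5), (5,2)}

def ctry : ℕ → Fin 2 := fun v => if v ≤ 4 then 0 else 1

lemma arcs_facts0 : ∀ p ∈ arcsX,
    (p.1 = 1 ∧ (p.2 = 2 ∨ p.2 = 7)) ∨ (p.1 = 2 ∧ (p.2 = 3 ∨ p.2 = 5)) ∨
    (p.1 = 3 ∧ (p.2 = 4 ∨ p.2 = 6)) ∨ (p.1 = 4 ∧ p.2 = 5) ∨
    (p.1 = 5 ∧ (p.2 = 6 ∨ p.2 = 2)) ∨ (p.1 = 6 ∧ p.2 = 1) ∨ (p.1 = 7 ∧ p.2 = 3) := by decide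

lemma vertsX_cases0 : ∀ v ∈ vertsX,
    v = 1 ∨ v = 2 ∨ v = 3 ∨ v = 4 ∨ v = 5 ∨ v = 6 ∨ v = 7 := by decide

def GX : PartGraph 2 where
  verts := vertsX
  arcs := arcsX
  arcs_mem := by decide
  no_loops := by
    intro v hv
    have := arcs_facts0 _ hv
    omega
  country := ctry
  country_nonempty := by decide

lemma arcs_facts {u w : ℕ} (h : (u, w) ∈ GX.arcs) :
    (u = 1 ∧ (w = 2 ∨ w = 7)) ∨ (u = 2 ∧ (w = 3 ∨ w = 5)) ∨ (u = 3 ∧ (w = 4 ∨ w = 6)) ∨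
    (u = 4 ∧ w = 5) ∨ (u = 5 ∧ (w = 6 ∨ w = 2)) ∨ (u = 6 ∧ w = 1) ∨ (u = 7 ∧ w = 3) := by
  exact arcs_facts0 (u, w) h

lemma vertsX_cases {v : ℕ} (h : v ∈ vertsX) :
    v = 1 ∨ v = 2 ∨ v = 3 ∨ v = 4 ∨ v = 5 ∨ v = 6 ∨ v = 7 := by
  exact vertsX_cases0 v h

def Γ0 : Params 2 where
  icl := ⊤
  ncl := fun _ => 0
  iss := ![⊤, 2]
  isn := ![2, ⊤]
  icl_ne_one := by decide
  ncl_ne_one := by decide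
  iss_pos := by decide
  isn_pos := by decide

def Γ1 : Params 2 where
  icl := ⊤
  ncl := fun _ => 0
  iss := ![⊤, 2]
  isn := ![1, ⊤]
  icl_ne_one := by decide
  ncl_ne_one := by decide
  iss_pos := by decide
  isn_pos := by decide

def Γ2 : Params 2 where
  icl := ⊤
  ncl := fun _ => 0
  iss := ![⊤, 1]
  isn := ![2, ⊤]
  icl_ne_one := by decide
  ncl_ne_one := by decide
  iss_pos := by decide
  isn_pos := by decide

abbrev mkI (p : Params 2) : IKEP := ⟨2, one_le_two, GX, p⟩

lemma mem_uncovered {p : Params 2} {P : Finset (List ℕ)} {v : ℕ} :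
    v ∈ uncovered (mkI p) P ↔ v ∈ vertsX ∧ ∀ l ∈ P, v ∉ l :=
  Finset.mem_filter

/- parity: the graph is bipartite, so every cycle has even length -/

def parX (v : ℕ) : Bool := v == 1 || v == 3 || v == 5

lemma parX_arc : ∀ p ∈ GX.arcs, parX p.2 = !parX p.1 := by decide

lemma cycle_even {l : List ℕ} (hc : IsCycle GX l) : 2 ∣ l.length := by
  have step : ∀ k, parX (cyc l (k + 1)) = !parX (cyc l k) := fun k =>
    parX_arc _ (arc_cyc hc k)
  have main : ∀ k, parX (cyc l k) = Bool.xor (decide (k % 2 = 1)) (parX (cyc l 0)) := by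
    intro k
    induction k with
    | zero => simp
    | succ k ih =>
      rw [step k, ih]
      rcases Nat.even_or_odd k with he | ho
      · have h1 : k % 2 = 0 := Nat.even_iff.mp he
        have h2 : (k + 1) % 2 = 1 := by omega
        simp [h1, h2]
      · have h1 : k % 2 = 1 := Nat.odd_iff.mp ho
        have h2 : (k + 1) % 2 = 0 := by omega
        simp [h1, h2]
  have hlen : cyc l l.length = cyc l 0 := cyc_congr l (by rw [Nat.mod_self, Nat.zero_mod])
  have hmain := main l.length
  rw [hlen] at hmain
  by_cases hp : l.length % 2 = 1
  · exfalso
    rw [hp] at hmain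
    simp at hmain
  · omega

/- covered vertices -/

lemma packing_disjoint {P : Finset (List ℕ)} (hpack : IsPacking GX P) :
    ∀ a ∈ P, ∀ b ∈ P, a ≠ b → Disjoint a.toFinset b.toFinset := by
  intro a ha b hb hne
  rw [Finset.disjoint_left]
  intro v hva hvb
  exact hpack.2 a ha b hb hne v (List.mem_toFinset.mp hva) (List.mem_toFinset.mp hvb)

lemma biUnion_eq (p : Params 2) {P : Finset (List ℕ)} (hpack : IsPacking GX P) :
    P.biUnion List.toFinset = vertsX \ uncovered (mkI p) P := by
  ext v
  simp only [Finset.mem_biUnion, List.mem_toFinset, Finset.mem_sdiff, mem_uncovered]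
  constructor
  · rintro ⟨l, hl, hvl⟩
    refine ⟨(hpack.1 l hl).2.2.1 v hvl, ?_⟩
    rintro ⟨-, hall⟩
    exact hall l hl hvl
  · rintro ⟨hv, hnot⟩
    by_contra hno
    push_neg at hno
    exact hnot ⟨hv, fun l hl => hno l hl⟩

lemma covered_struct (p : Params 2) {P : Finset (List ℕ)} (hpack : IsPacking GX P)
    (hcard : (uncovered (mkI p) P).card ≤ 1) :
    ∃ x, x ∈ vertsX ∧ uncovered (mkI p) P = {x} := by
  have hUsub : uncovered (mkI p) P ⊆ vertsX := fun v hv => (mem_uncovered.mp hv).1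
  have hsize : packSize P = (vertsX \ uncovered (mkI p) P).card := by
    rw [← biUnion_eq p hpack, Finset.card_biUnion (packing_disjoint hpack)]
    exact Finset.sum_congr rfl fun l hl =>
      (List.toFinset_card_of_nodup (hpack.1 l hl).2.1).symm
  have heven : 2 ∣ packSize P := Finset.dvd_sum fun l hl => cycle_even (hpack.1 l hl)
  have hcard7 : vertsX.card = 7 := by decide
  have hU : (vertsX \ uncovered (mkI p) P).card = 7 - (uncovered (mkI p) P).card := by
    rw [Finset.card_sdiff_of_subset hUsub, hcard7]
  have h1 : (uncovered (mkI p) P).card = 1 := by omega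
  obtain ⟨x, hx⟩ := Finset.card_eq_one.mp h1
  refine ⟨x, ?_, hx⟩
  rw [← Finset.singleton_subset_iff, ← hx]
  exact hUsub

lemma packUtil_eq {P : Finset (List ℕ)} (hpack : IsPacking GX P) (i : Fin 2) :
    packUtil GX i P = ((P.biUnion List.toFinset).filter fun v => GX.country v = i).card := by
  rw [Finset.filter_biUnion, Finset.card_biUnion]
  · unfold packUtil cycUtil
    apply Finset.sum_congr rfl
    intro l hl
    have hnd := (hpack.1 l hl).2.1
    have hndf : (l.filter fun v => GX.country v = i).Nodup := hnd.filter _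
    rw [← List.toFinset_card_of_nodup hndf, List.toFinset_filter]
    congr 1
    apply Finset.filter_congr
    intro v _
    simp
  · intro a ha b hb hne
    exact Finset.disjoint_filter_filter (packing_disjoint hpack a ha b hb hne)

lemma fin2_cases : ∀ c : Fin 2, c = 0 ∨ c = 1 := by decide

lemma utilsum (p : Params 2) {P : Finset (List ℕ)} (hpack : IsPacking GX P)
    (hcard : (uncovered (mkI p) P).card ≤ 1) :
    packUtil GX 0 P + packUtil GX 1 P = 6 := by
  obtain ⟨x, hxv, hxU⟩ := covered_struct p hpack hcard
  rw [packUtil_eq hpack 0, packUtil_eq hpack 1, biUnion_eq p hpack, hxU]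
  set s := vertsX \ {x} with hs
  have hd : Disjoint (s.filter fun v => GX.country v = 0) (s.filter fun v => GX.country v = 1) := by
    rw [Finset.disjoint_left]
    intro a h0 h1
    rw [Finset.mem_filter] at h0 h1
    rw [h0.2] at h1
    exact absurd h1.2 (by decide)
  have hu : (s.filter fun v => GX.country v = 0) ∪ (s.filter fun v => GX.country v = 1) = s := by
    ext a
    simp only [Finset.mem_union, Finset.mem_filter]
    constructor
    · rintro (h | h)
      exacts [h.1, h.1]
    · intro ha
      rcases fin2_cases (GX.country a) with h | h
      exacts [Or.inl ⟨ha, h⟩, Or.inr ⟨ha, h⟩]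
  rw [← Finset.card_union_of_disjoint hd, hu, hs,
    Finset.card_sdiff_of_subset (Finset.singleton_subset_iff.mpr hxv)]
  rfl

/- The witness packings -/

lemma gcycP (p : Params 2) (hncl : p.icl = ⊤) (hiss : p.iss = ![⊤, 2]) (hisn : (1:ℕ∞) ≤ p.isn 0 ∧ p.isn 1 = ⊤) :
    IsGammaCycle GX p [1,2,3,4,5,6] := by
  refine ⟨by decide, Or.inr ⟨by decide, by rw [hncl]; exact le_top, ?_, ?_⟩⟩
  · intro i k hk hseg
    rw [hiss]
    rcases fin2_cases i with rfl | rfl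
    · exact le_top
    · have hk4 : k = 4 := by
        simp only [List.length_cons, List.length_nil] at hk
        interval_cases k <;> first | rfl | (exact absurd hseg (by decide))
      subst hk4
      have : runLen GX [1,2,3,4,5,6] 1 4 = 2 := by rw [runLen_eq]; decide
      rw [this]
      have h22 : ((2:ℕ):ℕ∞) ≤ (2:ℕ∞) := by exact_mod_cast le_refl (2:ℕ)
      exact h22
  · intro i
    rcases fin2_cases i with rfl | rfl
    · have : numSegs GX [1,2,3,4,5,6] 0 = 1 := by rw [numSegs_eq]; decide
      rw [this, Nat.cast_one]
      exact hisn.1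
    · rw [hisn.2]; exact le_top

lemma gcycQ1 : IsGammaCycle GX Γ2 [1,7,3,6] := by
  refine ⟨by decide, Or.inr ⟨by decide, le_top, ?_, ?_⟩⟩
  · intro i k hk hseg
    rcases fin2_cases i with rfl | rfl
    · exact le_top
    · have hrl : runLen GX [1,7,3,6] 1 k ≤ 1 := by
        rw [runLen_eq]
        have hsub : ((Finset.range [1,7,3,6].length).filter
            fun j => ∀ j' ≤ j, GX.country (cyc [1,7,3,6] (k + j')) = 1) ⊆ {0} := by
          intro j hj
          rw [Finset.mem_filter, Finset.mem_range] at hj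
          rw [Finset.mem_singleton]
          by_contra hj0
          have h1 := hj.2 0 (by omega)
          have h2 := hj.2 1 (by omega)
          simp only [List.length_cons, List.length_nil] at hj
          have hk4 : k < 4 := by
            simp only [List.length_cons, List.length_nil] at hk; omega
          interval_cases k <;> revert h1 h2 <;> decide
        exact (Finset.card_le_card hsub).trans (by decide)
      calc ((runLen GX [1,7,3,6] 1 k : ℕ∞)) ≤ ((1:ℕ) : ℕ∞) := Nat.cast_le.mpr hrl
        _ = 1 := Nat.cast_one
  · intro i
    rcases fin2_cases i with rfl | rfl
    · have : numSegs GX [1,7,3,6] 0 = 2 := by rw [numSegs_eq]; decide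
      rw [this]
      have h22 : ((2:ℕ):ℕ∞) ≤ (2:ℕ∞) := by exact_mod_cast le_refl (2:ℕ)
      exact h22
    · exact le_top

lemma gcycQ2 : IsGammaCycle GX Γ2 [2,5] := by
  refine ⟨by decide, Or.inr ⟨by decide, le_top, ?_, ?_⟩⟩
  · intro i k hk hseg
    rcases fin2_cases i with rfl | rfl
    · exact le_top
    · have hrl : runLen GX [2,5] 1 k ≤ 1 := by
        rw [runLen_eq]
        have hsub : ((Finset.range [2,5].length).filter
            fun j => ∀ j' ≤ j, GX.country (cyc [2,5] (k + j')) = 1) ⊆ {0} := by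
          intro j hj
          rw [Finset.mem_filter, Finset.mem_range] at hj
          rw [Finset.mem_singleton]
          by_contra hj0
          have h1 := hj.2 0 (by omega)
          have h2 := hj.2 1 (by omega)
          simp only [List.length_cons, List.length_nil] at hj
          have hk4 : k < 2 := by
            simp only [List.length_cons, List.length_nil] at hk; omega
          interval_cases k <;> revert h1 h2 <;> decide
        exact (Finset.card_le_card hsub).trans (by decide)
      calc ((runLen GX [2,5] 1 k : ℕ∞)) ≤ ((1:ℕ) : ℕ∞) := Nat.cast_le.mpr hrl
        _ = 1 := Nat.cast_one
  · intro i
    rcases fin2_cases i with rfl | rfl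
    · have : numSegs GX [2,5] 0 = 1 := by rw [numSegs_eq]; decide
      rw [this, Nat.cast_one]
      exact one_le_two
    · exact le_top

lemma wit0 : IsGammaPacking (mkI Γ0) {[1,2,3,4,5,6]} := by
  constructor
  · exact (by decide : IsPacking GX {[1,2,3,4,5,6]})
  · intro l hl
    rw [Finset.mem_singleton] at hl
    subst hl
    exact gcycP Γ0 rfl rfl ⟨one_le_two, rfl⟩

lemma wit1 : IsGammaPacking (mkI Γ1) {[1,2,3,4,5,6]} := by
  constructor
  · exact (by decide : IsPacking GX {[1,2,3,4,5,6]})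
  · intro l hl
    rw [Finset.mem_singleton] at hl
    subst hl
    exact gcycP Γ1 rfl rfl ⟨le_refl _, rfl⟩

lemma wit2 : IsGammaPacking (mkI Γ2) {[1,7,3,6],[2,5]} := by
  constructor
  · exact (by decide : IsPacking GX {[1,7,3,6],[2,5]})
  · intro l hl
    rw [Finset.mem_insert, Finset.mem_singleton] at hl
    rcases hl with rfl | rfl
    exacts [gcycQ1, gcycQ2]

lemma unc_wit01 (p : Params 2) :
    (uncovered (mkI p) {[1,2,3,4,5,6]}).card ≤ 1 := by
  have hsub : uncovered (mkI p) {[1,2,3,4,5,6]} ⊆ {7} := by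
    intro v hv
    obtain ⟨hv1, hv2⟩ := mem_uncovered.mp hv
    have hv3 := hv2 [1,2,3,4,5,6] (Finset.mem_singleton_self _)
    rw [Finset.mem_singleton]
    have := vertsX_cases hv1
    simp only [List.mem_cons, List.not_mem_nil] at hv3
    omega
  exact (Finset.card_le_card hsub).trans (by decide)

lemma unc_wit2 :
    (uncovered (mkI Γ2) {[1,7,3,6],[2,5]}).card ≤ 1 := by
  have hsub : uncovered (mkI Γ2) {[1,7,3,6],[2,5]} ⊆ {4} := by
    intro v hv
    obtain ⟨hv1, hv2⟩ := mem_uncovered.mp hv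
    have hv3 := hv2 [1,7,3,6] (by rw [Finset.mem_insert]; left; rfl)
    have hv4 := hv2 [2,5] (by rw [Finset.mem_insert, Finset.mem_singleton]; right; rfl)
    rw [Finset.mem_singleton]
    have := vertsX_cases hv1
    simp only [List.mem_cons, List.not_mem_nil] at hv3 hv4
    omega
  exact (Finset.card_le_card hsub).trans (by decide)

lemma covered_mem (p : Params 2) {P : Finset (List ℕ)} (hpack : IsPacking GX P) {x : ℕ}
    (hxU : uncovered (mkI p) P = {x}) :
    (∀ v ∈ vertsX, v ≠ x → ∃ l ∈ P, v ∈ l) ∧ (∀ l ∈ P, ∀ v ∈ l, v ∈ vertsX ∧ v ≠ x) := by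
  constructor
  · intro v hv hne
    have hnu : v ∉ uncovered (mkI p) P := by rw [hxU, Finset.mem_singleton]; exact hne
    rw [mem_uncovered] at hnu
    push_neg at hnu
    exact hnu hv
  · intro l hl v hv
    have hvV : v ∈ vertsX := (hpack.1 l hl).2.2.1 v hv
    refine ⟨hvV, ?_⟩
    intro hvx
    subst hvx
    have hm : v ∈ uncovered (mkI p) P := by rw [hxU]; exact Finset.mem_singleton_self v
    exact (mem_uncovered.mp hm).2 l hl hv

lemma not_national {p : Params 2} (hncl : p.ncl = fun _ => 0) {l : List ℕ} (hc : IsCycle GX l)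
    (hg : IsGammaCycle GX p l) :
    IsInternational GX l ∧
      (∀ i, ∀ k < l.length, segStart GX l i k → (runLen GX l i k : ℕ∞) ≤ p.iss i) ∧
      (∀ i, (numSegs GX l i : ℕ∞) ≤ p.isn i) := by
  rcases hg.2 with ⟨i, -, hlen⟩ | ⟨h1, -, h2, h3⟩
  · exfalso
    rw [hncl] at hlen
    have hlen' : (l.length : ℕ∞) ≤ 0 := hlen
    have h0 : l.length = 0 := by exact_mod_cast nonpos_iff_eq_zero.mp hlen'
    have := hc.1
    omega
  · exact ⟨h1, h2, h3⟩

lemma lemB {P : Finset (List ℕ)} (hgp : IsGammaPacking (mkI Γ1) P)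
    (hcard : (uncovered (mkI Γ1) P).card ≤ 1) :
    packUtil GX 0 P = 4 := by
  have hpack : IsPacking GX P := hgp.1
  obtain ⟨x, hxv, hxU⟩ := covered_struct Γ1 hpack hcard
  obtain ⟨hcov, hmem⟩ := covered_mem Γ1 hpack hxU
  have hx567 : x = 5 ∨ x = 6 ∨ x = 7 := by
    rcases vertsX_cases hxv with rfl | rfl | rfl | rfl | h | h | h
    · -- x = 1 : vertex 6 is covered but its successor must be 1
      exfalso
      obtain ⟨l, hl, h6m⟩ := hcov 6 (by decide) (by omega)
      have hc := hpack.1 l hl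
      have h0 : 0 < l.length := by have := hc.1; omega
      have h1 : nxt l 6 = 1 := by have := arcs_facts (arc_nxt hc h6m); omega
      have := (hmem l hl _ (nxt_mem h0 6)).2
      omega
    · -- x = 2 : reconstruct two country-0 segment starts on the cycle through 1
      exfalso
      obtain ⟨l, hl, h1m⟩ := hcov 1 (by decide) (by omega)
      have hc := hpack.1 l hl
      have h0 : 0 < l.length := by have := hc.1; omega
      have hnd := hc.2.1
      have hn1 : nxt l 1 = 7 := by
        have := arcs_facts (arc_nxt hc h1m)
        have := (hmem l hl _ (nxt_mem h0 1)).2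
        omega
      have h7m : 7 ∈ l := by rw [← hn1]; exact nxt_mem h0 1
      have hn7 : nxt l 7 = 3 := by have := arcs_facts (arc_nxt hc h7m); omega
      have h3m : 3 ∈ l := by rw [← hn7]; exact nxt_mem h0 7
      have hp1 : prv l 1 = 6 := by have := arcs_facts (arc_prv hc h1m); omega
      have hp3 : prv l 3 = 7 := by
        have := arcs_facts (arc_prv hc h3m)
        have := (hmem l hl _ (prv_mem h0 3)).2
        omega
      have hs1 : segStart GX l 0 (l.idxOf 1) :=
        segStart_at h1m (by decide) (by rw [hp1]; decide)
      have hs3 : segStart GX l 0 (l.idxOf 3) :=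
        segStart_at h3m (by decide) (by rw [hp3]; decide)
      have h2seg := two_le_numSegs h1m h3m (by omega) hs1 hs3
      obtain ⟨-, -, hisn⟩ := not_national rfl hc (hgp.2 l hl)
      have hle : (numSegs GX l 0 : ℕ∞) ≤ 1 := hisn 0
      have : numSegs GX l 0 ≤ 1 := by exact_mod_cast hle
      omega
    · -- x = 3 : vertex 4 is covered but its predecessor must be 3
      exfalso
      obtain ⟨l, hl, h4m⟩ := hcov 4 (by decide) (by omega)
      have hc := hpack.1 l hl
      have h0 : 0 < l.length := by have := hc.1; omega
      have hp4 : prv l 4 = 3 := by have := arcs_facts (arc_prv hc h4m); omega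
      have := (hmem l hl _ (prv_mem h0 4)).2
      omega
    · -- x = 4
      exfalso
      obtain ⟨l, hl, h3m⟩ := hcov 3 (by decide) (by omega)
      have hc := hpack.1 l hl
      have h0 : 0 < l.length := by have := hc.1; omega
      have hnd := hc.2.1
      have hn3 : nxt l 3 = 6 := by
        have := arcs_facts (arc_nxt hc h3m)
        have := (hmem l hl _ (nxt_mem h0 3)).2
        omega
      have h6m : 6 ∈ l := by rw [← hn3]; exact nxt_mem h0 3
      have hn6 : nxt l 6 = 1 := by have := arcs_facts (arc_nxt hc h6m); omega
      have h1m : 1 ∈ l := by rw [← hn6]; exact nxt_mem h0 6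
      have hp1 : prv l 1 = 6 := by have := arcs_facts (arc_prv hc h1m); omega
      have hs1 : segStart GX l 0 (l.idxOf 1) :=
        segStart_at h1m (by decide) (by rw [hp1]; decide)
      have hp3 : prv l 3 = 7 ∨ prv l 3 = 2 := by
        have := arcs_facts (arc_prv hc h3m); omega
      have hcontra : 2 ≤ numSegs GX l 0 := by
        rcases hp3 with hp3 | hp3
        · exact two_le_numSegs h1m h3m (by omega) hs1
            (segStart_at h3m (by decide) (by rw [hp3]; decide))
        · have h2m : 2 ∈ l := by rw [← hp3]; exact prv_mem h0 3
          have hp2 : prv l 2 = 1 ∨ prv l 2 = 5 := by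
            have := arcs_facts (arc_prv hc h2m); omega
          rcases hp2 with hp2 | hp2
          · -- contradiction via vertex 7
            exfalso
            obtain ⟨l', hl', h7m⟩ := hcov 7 (by decide) (by omega)
            have hc' := hpack.1 l' hl'
            have h0' : 0 < l'.length := by have := hc'.1; omega
            have hn7 : nxt l' 7 = 3 := by have := arcs_facts (arc_nxt hc' h7m); omega
            have h3m' : 3 ∈ l' := by rw [← hn7]; exact nxt_mem h0' 7
            have hll : l = l' := same_list hpack hl hl' h3m h3m'
            subst hll
            have hn2 : nxt l 2 = 3 := by rw [← hp3]; exact nxt_prv hnd h0 h3m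
            have h72 : (7:ℕ) = 2 := nxt_inj hnd h0 h7m h2m (by rw [hn7, hn2])
            omega
          · exact two_le_numSegs h1m h2m (by omega) hs1
              (segStart_at h2m (by decide) (by rw [hp2]; decide))
      obtain ⟨-, -, hisn⟩ := not_national rfl hc (hgp.2 l hl)
      have hle : (numSegs GX l 0 : ℕ∞) ≤ 1 := hisn 0
      have : numSegs GX l 0 ≤ 1 := by exact_mod_cast hle
      omega
    · exact Or.inl h
    · exact Or.inr (Or.inl h)
    · exact Or.inr (Or.inr h)
  rw [packUtil_eq hpack 0, biUnion_eq Γ1 hpack, hxU]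
  rcases hx567 with rfl | rfl | rfl <;> decide

lemma lemC {P : Finset (List ℕ)} (hgp : IsGammaPacking (mkI Γ2) P)
    (hcard : (uncovered (mkI Γ2) P).card ≤ 1) :
    packUtil GX 1 P = 3 := by
  have hpack : IsPacking GX P := hgp.1
  obtain ⟨x, hxv, hxU⟩ := covered_struct Γ2 hpack hcard
  obtain ⟨hcov, hmem⟩ := covered_mem Γ2 hpack hxU
  have hx1234 : x = 1 ∨ x = 2 ∨ x = 3 ∨ x = 4 := by
    rcases vertsX_cases hxv with h | h | h | h | rfl | rfl | rfl
    · exact Or.inl h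
    · exact Or.inr (Or.inl h)
    · exact Or.inr (Or.inr (Or.inl h))
    · exact Or.inr (Or.inr (Or.inr h))
    · -- x = 5 : vertex 4 covered, successor must be 5
      exfalso
      obtain ⟨l, hl, h4m⟩ := hcov 4 (by decide) (by omega)
      have hc := hpack.1 l hl
      have h0 : 0 < l.length := by have := hc.1; omega
      have hn4 : nxt l 4 = 5 := by have := arcs_facts (arc_nxt hc h4m); omega
      have := (hmem l hl _ (nxt_mem h0 4)).2
      omega
    · -- x = 6 : vertex 1 covered, predecessor must be 6
      exfalso
      obtain ⟨l, hl, h1m⟩ := hcov 1 (by decide) (by omega)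
      have hc := hpack.1 l hl
      have h0 : 0 < l.length := by have := hc.1; omega
      have hp1 : prv l 1 = 6 := by have := arcs_facts (arc_prv hc h1m); omega
      have := (hmem l hl _ (prv_mem h0 1)).2
      omega
    · -- x = 7 : the cycle through 6 has a country-1 run of length ≥ 2
      exfalso
      obtain ⟨l, hl, h6m⟩ := hcov 6 (by decide) (by omega)
      have hc := hpack.1 l hl
      have h0 : 0 < l.length := by have := hc.1; omega
      have hnd := hc.2.1
      have hp6 : prv l 6 = 5 ∨ prv l 6 = 3 := by
        have := arcs_facts (arc_prv hc h6m); omega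
      rcases hp6 with hp6 | hp6
      · have h5m : 5 ∈ l := by rw [← hp6]; exact prv_mem h0 6
        have hn5 : nxt l 5 = 6 := by rw [← hp6]; exact nxt_prv hnd h0 h6m
        have hp5 : prv l 5 = 4 ∨ prv l 5 = 2 := by
          have := arcs_facts (arc_prv hc h5m); omega
        have hs5 : segStart GX l 1 (l.idxOf 5) :=
          segStart_at h5m (by decide) (by rcases hp5 with h | h <;> rw [h] <;> decide)
        have hrl : 2 ≤ runLen GX l 1 (l.idxOf 5) :=
          two_le_runLen hc.1 h5m (by decide) (by rw [hn5]; decide)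
        obtain ⟨-, hiss, -⟩ := not_national rfl hc (hgp.2 l hl)
        have hle : (runLen GX l 1 (l.idxOf 5) : ℕ∞) ≤ 1 :=
          hiss 1 (l.idxOf 5) (List.idxOf_lt_length_iff.mpr h5m) hs5
        have : runLen GX l 1 (l.idxOf 5) ≤ 1 := by exact_mod_cast hle
        omega
      · have h3m : 3 ∈ l := by rw [← hp6]; exact prv_mem h0 6
        have hn3 : nxt l 3 = 6 := by rw [← hp6]; exact nxt_prv hnd h0 h6m
        obtain ⟨l', hl', h4m⟩ := hcov 4 (by decide) (by omega)
        have hc' := hpack.1 l' hl'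
        have h0' : 0 < l'.length := by have := hc'.1; omega
        have hp4 : prv l' 4 = 3 := by have := arcs_facts (arc_prv hc' h4m); omega
        have h3m' : 3 ∈ l' := by rw [← hp4]; exact prv_mem h0' 4
        have hll : l = l' := same_list hpack hl hl' h3m h3m'
        subst hll
        have hn3' : nxt l 3 = 4 := by rw [← hp4]; exact nxt_prv hnd h0 h4m
        rw [hn3] at hn3'
        omega
  rw [packUtil_eq hpack 1, biUnion_eq Γ2 hpack, hxU]
  rcases hx1234 with rfl | rfl | rfl | rfl <;> decide

lemma paramLE1 : ParamLE 0 Γ1 Γ0 := by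
  refine ⟨rfl, rfl, le_refl _, ?_, ?_, ?_⟩
  · show (1:ℕ∞) ≤ 2
    exact one_le_two
  · intro h' _
    rfl
  · intro h' hne
    rcases fin2_cases h' with rfl | rfl
    · exact absurd rfl hne
    · rfl

lemma paramLE2 : ParamLE 1 Γ2 Γ0 := by
  refine ⟨rfl, rfl, ?_, le_refl _, ?_, ?_⟩
  · show (1:ℕ∞) ≤ 2
    exact one_le_two
  · intro h' hne
    rcases fin2_cases h' with rfl | rfl
    · rfl
    · exact absurd rfl hne
  · intro h' _
    rfl

theorem no_nearPerfect_and_IC' (M : Mechanism) (h : NearPerfectMech M) :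
    ¬ IncentiveCompatible M := by
  intro hIC
  have hex0 : ∃ P, IsGammaPacking (mkI Γ0) P ∧ (uncovered (mkI Γ0) P).card ≤ 1 :=
    ⟨{[1,2,3,4,5,6]}, wit0, unc_wit01 Γ0⟩
  have hex1 : ∃ P, IsGammaPacking (mkI Γ1) P ∧ (uncovered (mkI Γ1) P).card ≤ 1 :=
    ⟨{[1,2,3,4,5,6]}, wit1, unc_wit01 Γ1⟩
  have hex2 : ∃ P, IsGammaPacking (mkI Γ2) P ∧ (uncovered (mkI Γ2) P).card ≤ 1 :=
    ⟨{[1,7,3,6],[2,5]}, wit2, unc_wit2⟩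
  -- expected utility of country 0 in the Γ1-instance is exactly 4
  have hU1 : expUtil M (mkI Γ1) 0 = 4 := by
    have hcongr : ((M.dist (mkI Γ1)).sum fun P p =>
          p * (packUtil (mkI Γ1).G (0 : Fin (mkI Γ1).n) P : ℝ))
        = (M.dist (mkI Γ1)).sum fun _ p => p * 4 := by
      apply Finsupp.sum_congr
      intro P hP
      have hne : M.dist (mkI Γ1) P ≠ 0 := Finsupp.mem_support_iff.mp hP
      have h4 : packUtil GX 0 P = 4 := lemB (M.supp _ P hne) (h (mkI Γ1) hex1 P hne)
      have h4' : packUtil (mkI Γ1).G (0 : Fin (mkI Γ1).n) P = 4 := h4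
      rw [h4']
      norm_num
    have hmul := Finsupp.sum_mul (4:ℝ) (M.dist (mkI Γ1)) (f := fun _ p => p)
    show ((M.dist (mkI Γ1)).sum fun P p =>
      p * (packUtil (mkI Γ1).G (0 : Fin (mkI Γ1).n) P : ℝ)) = 4
    rw [hcongr, ← hmul, M.sum_one, one_mul]
  -- expected utility of country 1 in the Γ2-instance is exactly 3
  have hU2 : expUtil M (mkI Γ2) 1 = 3 := by
    have hcongr : ((M.dist (mkI Γ2)).sum fun P p =>
          p * (packUtil (mkI Γ2).G (1 : Fin (mkI Γ2).n) P : ℝ))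
        = (M.dist (mkI Γ2)).sum fun _ p => p * 3 := by
      apply Finsupp.sum_congr
      intro P hP
      have hne : M.dist (mkI Γ2) P ≠ 0 := Finsupp.mem_support_iff.mp hP
      have h3 : packUtil GX 1 P = 3 := lemC (M.supp _ P hne) (h (mkI Γ2) hex2 P hne)
      have h3' : packUtil (mkI Γ2).G (1 : Fin (mkI Γ2).n) P = 3 := h3
      rw [h3']
      norm_num
    have hmul := Finsupp.sum_mul (3:ℝ) (M.dist (mkI Γ2)) (f := fun _ p => p)
    show ((M.dist (mkI Γ2)).sum fun P p =>
      p * (packUtil (mkI Γ2).G (1 : Fin (mkI Γ2).n) P : ℝ)) = 3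
    rw [hcongr, ← hmul, M.sum_one, one_mul]
  -- total expected utility in the Γ0-instance is exactly 6
  have hU0 : expUtil M (mkI Γ0) 0 + expUtil M (mkI Γ0) 1 = 6 := by
    have hcongr : ((M.dist (mkI Γ0)).sum fun P p =>
          p * (packUtil (mkI Γ0).G (0 : Fin (mkI Γ0).n) P : ℝ)
          + p * (packUtil (mkI Γ0).G (1 : Fin (mkI Γ0).n) P : ℝ))
        = (M.dist (mkI Γ0)).sum fun _ p => p * 6 := by
      apply Finsupp.sum_congr
      intro P hP
      have hne : M.dist (mkI Γ0) P ≠ 0 := Finsupp.mem_support_iff.mp hP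
      have h6 : packUtil GX 0 P + packUtil GX 1 P = 6 :=
        utilsum Γ0 (M.supp _ P hne).1 (h (mkI Γ0) hex0 P hne)
      have e0 : packUtil (mkI Γ0).G (0 : Fin (mkI Γ0).n) P = packUtil GX 0 P := rfl
      have e1 : packUtil (mkI Γ0).G (1 : Fin (mkI Γ0).n) P = packUtil GX 1 P := rfl
      rw [e0, e1, ← mul_add, ← Nat.cast_add, h6]
      norm_num
    have hmul := Finsupp.sum_mul (6:ℝ) (M.dist (mkI Γ0)) (f := fun _ p => p)
    show ((M.dist (mkI Γ0)).sum fun P p =>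
        p * (packUtil (mkI Γ0).G (0 : Fin (mkI Γ0).n) P : ℝ))
      + ((M.dist (mkI Γ0)).sum fun P p =>
        p * (packUtil (mkI Γ0).G (1 : Fin (mkI Γ0).n) P : ℝ)) = 6
    rw [← Finsupp.sum_add, hcongr, ← hmul, M.sum_one, one_mul]
  -- incentive compatibility applied to the two misreports
  have hic1 : expUtil M (mkI Γ1) 0 ≤ expUtil M (mkI Γ0) 0 := hIC (mkI Γ0) 0 Γ1 paramLE1
  have hic2 : expUtil M (mkI Γ2) 1 ≤ expUtil M (mkI Γ0) 1 := hIC (mkI Γ0) 1 Γ2 paramLE2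
  rw [hU1] at hic1
  rw [hU2] at hic2
  linarith

/-- There is no mechanism that is both near-perfect and
incentive compatible. -/
theorem no_nearPerfect_and_IC (M : Mechanism) (h : NearPerfectMech M) :
    ¬ IncentiveCompatible M := by
  exact no_nearPerfect_and_IC' M h
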